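/- arXiv:1111.6310 — 3 statements merged into one kernel-verified Lean document; each statement's English description precedes it below -/
import Mathlib

section
/- For every integer l ≥ 0, the ideal I_l of ℤ[q,q^{-1}] (generated by the elements {l−k}_q!{k}_q! for k = 0, …, l) is a principal ideal, generated by the element g_l = ∏_{m=1}^{l} Φ_m(q)^{⌊(l+1)/m⌋ − 1}, where Φ_m denotes the m-th cyclotomic polynomial and ⌊r⌋ is the floor function. (For l = 0 the empty product g_0 = 1 is understood.) -/
open LaurentPolynomial Finset

/-- `{i}_q = q^i - 1` in `ℤ[q,q⁻¹]`. -/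
noncomputable def qInt (i : ℤ) : LaurentPolynomial ℤ := T i - 1

/-- `{i}_{q,n} = {i}_q {i-1}_q ⋯ {i-n+1}_q`. -/
noncomputable def qShift (i : ℤ) (n : ℕ) : LaurentPolynomial ℤ :=
  ∏ r ∈ Finset.range n, qInt (i - r)

/-- `{n}_q! = {n}_{q,n}`. -/
noncomputable def qFact (n : ℕ) : LaurentPolynomial ℤ := qShift n n

/-- `g_l = ∏_{m=1}^{l} Φ_m(q)^{⌊(l+1)/m⌋ - 1}`. -/
noncomputable def gElt (l : ℕ) : LaurentPolynomial ℤ :=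
  ∏ m ∈ Finset.Icc 1 l, (Polynomial.cyclotomic m ℤ).toLaurent ^ ((l + 1) / m - 1)

/-- The ideal `I_l` of `ℤ[q,q⁻¹]` generated by `{l-k}_q! {k}_q!`, `k = 0, …, l`. -/
noncomputable def Iideal (l : ℕ) : Ideal (LaurentPolynomial ℤ) :=
  Ideal.span {x | ∃ k ≤ l, x = qFact (l - k) * qFact k}

/- ### Auxiliary numeric lemmas -/

lemma my_lem1 {m : ℕ} (hm : 0 < m) (a b : ℕ) : (a + b + 1) / m ≤ a / m + b / m + 1 := by
  have h1 : a + b + 1 = (a % m + b % m + 1) + (a / m) * m + (b / m) * m := by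
    have h2 := Nat.mod_add_div' a m
    have h3 := Nat.mod_add_div' b m
    omega
  rw [h1, Nat.add_mul_div_right _ _ hm, Nat.add_mul_div_right _ _ hm]
  have h4 : (a % m + b % m + 1) / m ≤ 1 := by
    have h5 : a % m < m := Nat.mod_lt _ hm
    have h6 : b % m < m := Nat.mod_lt _ hm
    have h7 : a % m + b % m + 1 < 2 * m := by omega
    have := (Nat.div_lt_iff_lt_mul hm).mpr (by omega : a % m + b % m + 1 < 2 * m)
    omega
  omega

lemma my_lem2 {m k l : ℕ} (hm : 0 < m) (hkl : k ≤ l) (hd : m ∣ k + 1) :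
    (l - k) / m + k / m + 1 = (l + 1) / m := by
  obtain ⟨a, ha⟩ := hd
  have ha1 : 1 ≤ a := by
    rcases Nat.eq_zero_or_pos a with rfl | h
    · omega
    · exact h
  have hk : k / m = a - 1 := by
    have h1 : (a - 1) * m ≤ k := by
      have : a * m = k + 1 := by rw [mul_comm] at ha; omega
      have : (a - 1) * m = a * m - m := by
        cases a with
        | zero => omega
        | succ t => simp [Nat.succ_sub_one, Nat.succ_mul]
      omega
    have h2 : k < (a - 1 + 1) * m := by
      have h3 : (a - 1 + 1) = a := by omega
      rw [h3]
      have : a * m = k + 1 := by rw [mul_comm] at ha; omega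
      omega
    exact Nat.div_eq_of_lt_le h1 h2
  have hma : m * a ≤ l + 1 := by omega
  have hlk : (l - k) / m = (l + 1) / m - a := by
    have h1 : l - k = (l + 1) - m * a := by omega
    rw [h1, Nat.sub_mul_div _ _ _]
  have hge : a ≤ (l + 1) / m := by
    rw [Nat.le_div_iff_mul_le hm, mul_comm]
    omega
  rw [hlk, hk]
  generalize (l + 1) / m = Q at hge ⊢
  omega

/- ### Cyclotomic factorizations -/

open Polynomial in
lemma my_prod_X_pow_sub_one (n : ℕ) :
    ∏ i ∈ Finset.range n, ((X : ℤ[X]) ^ (i + 1) - 1) =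
      ∏ m ∈ Finset.Icc 1 n, cyclotomic m ℤ ^ (n / m) := by
  have h1 : ∏ i ∈ Finset.range n, ((X : ℤ[X]) ^ (i + 1) - 1)
      = ∏ i ∈ Finset.Icc 1 n, ((X : ℤ[X]) ^ i - 1) := by
    rw [← Finset.Ico_add_one_right_eq_Icc, Finset.prod_Ico_eq_prod_range]
    refine Finset.prod_congr (by norm_num) fun i _ => by rw [add_comm]
  rw [h1]
  have h2 : ∀ i ∈ Finset.Icc 1 n, ((X : ℤ[X]) ^ i - 1) =
      ∏ d ∈ Finset.filter (· ∣ i) (Finset.Icc 1 n), cyclotomic d ℤ := by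
    intro i hi
    simp only [Finset.mem_Icc] at hi
    rw [← prod_cyclotomic_eq_X_pow_sub_one hi.1 ℤ]
    apply Finset.prod_congr _ fun _ _ => rfl
    ext d
    simp only [Nat.mem_divisors, Finset.mem_filter, Finset.mem_Icc]
    constructor
    · rintro ⟨hd, hi0⟩
      have h3 : 1 ≤ d := Nat.pos_of_dvd_of_pos hd (by omega)
      have h4 : d ≤ i := Nat.le_of_dvd (by omega) hd
      exact ⟨⟨h3, by omega⟩, hd⟩
    · rintro ⟨_, hd⟩
      exact ⟨hd, by omega⟩
  rw [Finset.prod_congr rfl h2]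
  simp_rw [Finset.prod_filter]
  rw [Finset.prod_comm]
  refine Finset.prod_congr rfl fun d hd => ?_
  rw [← Finset.prod_filter, Finset.prod_const]
  congr 1
  rw [show Finset.Icc 1 n = Finset.Ioc 0 n from Finset.Icc_add_one_left_eq_Ioc 0 n]
  exact Nat.Ioc_filter_dvd_card_eq_div n d

lemma my_qFact_eq (n : ℕ) : qFact n = ∏ i ∈ Finset.range n, (T ((i : ℤ) + 1) - 1) := by
  rw [qFact, qShift, ← Finset.prod_range_reflect]
  refine Finset.prod_congr rfl fun j hj => ?_
  simp only [Finset.mem_range] at hj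
  rw [qInt]
  congr 2
  omega

open Polynomial in
lemma my_qFact_toLaurent (n : ℕ) :
    qFact n = toLaurent (∏ m ∈ Finset.Icc 1 n, cyclotomic m ℤ ^ (n / m)) := by
  rw [← my_prod_X_pow_sub_one, map_prod, my_qFact_eq]
  refine Finset.prod_congr rfl fun i _ => ?_
  rw [map_sub, map_one, Polynomial.toLaurent_X_pow]
  congr 2

open Polynomial in
lemma my_prod_extend {l n : ℕ} (h : n ≤ l) :
    ∏ m ∈ Finset.Icc 1 n, cyclotomic m ℤ ^ (n / m)
      = ∏ m ∈ Finset.Icc 1 l, cyclotomic m ℤ ^ (n / m) := by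
  apply Finset.prod_subset (Finset.Icc_subset_Icc_right h)
  intro m hm hm'
  simp only [Finset.mem_Icc] at hm hm'
  rw [Nat.div_eq_of_lt (by omega), pow_zero]

open Polynomial in
lemma my_exists_good_k {K : Type*} [CommRing K] [IsDomain K] {ζ : K} {l m₀ : ℕ}
    (hm₀ : m₀ ∈ Finset.Icc 1 l) (hroot₀ : (cyclotomic m₀ K).IsRoot ζ) :
    ∃ k ≤ l, ∀ m ∈ Finset.Icc 1 l, (cyclotomic m K).IsRoot ζ → m ∣ k + 1 := by
  simp only [Finset.mem_Icc] at hm₀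
  have hζpow : ζ ^ m₀ = 1 := by
    obtain ⟨c, hc⟩ := cyclotomic.dvd_X_pow_sub_one m₀ K
    have h1 : eval ζ ((X : K[X]) ^ m₀ - 1) = 0 := by
      rw [hc, eval_mul, hroot₀, zero_mul]
    simpa [sub_eq_zero] using h1
  have hfin : IsOfFinOrder ζ := isOfFinOrder_iff_pow_eq_one.mpr ⟨m₀, by omega, hζpow⟩
  have hd1 : 0 < orderOf ζ := hfin.orderOf_pos
  set d := orderOf ζ with hd
  have hdl : d ≤ l :=
    le_trans (Nat.le_of_dvd (by omega) (orderOf_dvd_of_pow_eq_one hζpow)) hm₀.2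
  rcases CharP.char_is_prime_or_zero K (ringChar K) with hp | h0
  · haveI : Fact (ringChar K).Prime := ⟨hp⟩
    set p := ringChar K with hpdef
    haveI : CharP K p := ringChar.charP K
    set E := Nat.log p (l / d) with hE
    have hld : l / d ≠ 0 := by
      have := (Nat.one_le_div_iff hd1).mpr hdl
      omega
    have hEl : p ^ E * d ≤ l := by
      have h1 := Nat.pow_log_le_self p hld
      exact (Nat.le_div_iff_mul_le hd1).mp h1
    have hpos : 0 < p ^ E * d := Nat.mul_pos (pow_pos hp.pos E) hd1
    refine ⟨p ^ E * d - 1, by omega, ?_⟩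
    intro m hm hroot
    simp only [Finset.mem_Icc] at hm
    have hm0 : m ≠ 0 := by omega
    have hmn : p ^ (m.factorization p) * (m / p ^ (m.factorization p)) = m :=
      Nat.ordProj_mul_ordCompl_eq_self m p
    set e := m.factorization p
    set n := m / p ^ e with hn
    have hpn : ¬ p ∣ n := Nat.not_dvd_ordCompl hp hm0
    haveI : NeZero (n : K) := NeZero.of_not_dvd K hpn
    have hprim : IsPrimitiveRoot ζ n := by
      rw [← hmn] at hroot
      exact isRoot_cyclotomic_prime_pow_mul_iff_of_charP.mp hroot
    have hnd : n = d := hprim.eq_orderOf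
    have hel : e ≤ E := by
      have h1 : p ^ e * d ≤ l := by rw [← hnd, hmn]; omega
      have h2 : p ^ e ≤ l / d := (Nat.le_div_iff_mul_le hd1).mpr h1
      exact (Nat.le_log_iff_pow_le hp.one_lt hld).mpr h2
    rw [show p ^ E * d - 1 + 1 = p ^ E * d by omega, ← hmn, hnd]
    exact Nat.mul_dvd_mul (pow_dvd_pow p hel) dvd_rfl
  · haveI : CharP K 0 := h0 ▸ ringChar.charP K
    haveI : CharZero K := CharP.charP_to_charZero K
    refine ⟨d - 1, by omega, ?_⟩
    intro m hm hroot
    simp only [Finset.mem_Icc] at hm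
    have hmd : m = d := ((isRoot_cyclotomic_iff_charZero (by omega)).mp hroot).eq_orderOf
    rw [show d - 1 + 1 = d by omega, hmd]

/-- The cofactor `u_k = F_k / g_l` as an honest polynomial. -/
noncomputable def myUk (l k : ℕ) : Polynomial ℤ :=
  ∏ m ∈ Finset.Icc 1 l, Polynomial.cyclotomic m ℤ ^ ((l - k) / m + k / m + 1 - (l + 1) / m)

open Polynomial in
lemma my_fact_eq {l k : ℕ} (hk : k ≤ l) :
    qFact (l - k) * qFact k =
      toLaurent (∏ m ∈ Finset.Icc 1 l, cyclotomic m ℤ ^ ((l - k) / m + k / m)) := by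
  rw [my_qFact_toLaurent, my_qFact_toLaurent, my_prod_extend (Nat.sub_le l k),
    my_prod_extend hk, ← map_mul, ← Finset.prod_mul_distrib]
  simp_rw [← pow_add]

open Polynomial in
lemma my_gElt_eq (l : ℕ) :
    gElt l = toLaurent (∏ m ∈ Finset.Icc 1 l, cyclotomic m ℤ ^ ((l + 1) / m - 1)) := by
  rw [gElt, map_prod]
  simp_rw [map_pow]

open Polynomial in
lemma my_gU {l k : ℕ} (hk : k ≤ l) :
    (∏ m ∈ Finset.Icc 1 l, cyclotomic m ℤ ^ ((l + 1) / m - 1)) * myUk l k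
      = ∏ m ∈ Finset.Icc 1 l, cyclotomic m ℤ ^ ((l - k) / m + k / m) := by
  rw [myUk, ← Finset.prod_mul_distrib]
  refine Finset.prod_congr rfl fun m hm => ?_
  rw [← pow_add]
  congr 1
  simp only [Finset.mem_Icc] at hm
  have h1 := my_lem1 (m := m) (by omega) (l - k) k
  rw [show l - k + k + 1 = l + 1 by omega] at h1
  have h3 : 1 ≤ (l + 1) / m := (Nat.one_le_div_iff (by omega)).mpr (by omega)
  omega

/-- For every `l ≥ 0`, the ideal `I_l` is principal, generated by `g_l`. -/
theorem Iideal_eq_span_gElt (l : ℕ) : Iideal l = Ideal.span {gElt l} := by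
  apply le_antisymm
  · rw [Iideal, Ideal.span_le]
    rintro x ⟨k, hk, rfl⟩
    rw [SetLike.mem_coe, Ideal.mem_span_singleton]
    exact ⟨Polynomial.toLaurent (myUk l k), by
      rw [my_gElt_eq, ← map_mul, my_gU hk, ← my_fact_eq hk]⟩
  · rw [Ideal.span_le, Set.singleton_subset_iff, SetLike.mem_coe]
    set J : Ideal (LaurentPolynomial ℤ) :=
      Ideal.span {x | ∃ k ≤ l, x = Polynomial.toLaurent (myUk l k)} with hJ
    have hJtop : J = ⊤ := by
      by_contra hne
      obtain ⟨P, hPmax, hJP⟩ := Ideal.exists_le_maximal J hne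
      haveI : P.IsPrime := hPmax.isPrime
      set K := LaurentPolynomial ℤ ⧸ P with hK
      set ψ : Polynomial ℤ →+* K :=
        (Ideal.Quotient.mk P).comp Polynomial.toLaurent with hψ
      set ζ := ψ Polynomial.X with hζ
      have hψeq : ψ = Polynomial.eval₂RingHom (Int.castRingHom K) ζ := by
        apply Polynomial.ringHom_ext
        · intro a
          exact DFunLike.congr_fun
            (RingHom.ext_int (ψ.comp Polynomial.C)
              ((Polynomial.eval₂RingHom (Int.castRingHom K) ζ).comp Polynomial.C)) a
        · simp [Polynomial.coe_eval₂RingHom, Polynomial.eval₂_X, hζ]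
      have hcyc : ∀ m : ℕ, ψ (Polynomial.cyclotomic m ℤ)
          = Polynomial.eval ζ (Polynomial.cyclotomic m K) := by
        intro m
        rw [hψeq]
        simp only [Polynomial.coe_eval₂RingHom]
        rw [Polynomial.eval₂_eq_eval_map, Polynomial.map_cyclotomic_int]
      have hU0 : ∀ k ≤ l, ψ (myUk l k) = 0 := by
        intro k hk
        have hx : Polynomial.toLaurent (myUk l k) ∈ J := Ideal.subset_span ⟨k, hk, rfl⟩
        have hx2 := hJP hx
        rwa [← Ideal.Quotient.eq_zero_iff_mem] at hx2
      have hfind : ∀ k ≤ l, ∃ m ∈ Finset.Icc 1 l,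
          (Polynomial.cyclotomic m K).IsRoot ζ ∧
            (l - k) / m + k / m + 1 - (l + 1) / m ≠ 0 := by
        intro k hk
        have h0 := hU0 k hk
        rw [myUk, map_prod] at h0
        obtain ⟨m, hmmem, hm⟩ := Finset.prod_eq_zero_iff.mp h0
        rw [map_pow] at hm
        obtain ⟨hmz, hcne⟩ := pow_eq_zero_iff'.mp hm
        refine ⟨m, hmmem, ?_, hcne⟩
        rw [Polynomial.IsRoot.def, ← hcyc]
        exact hmz
      obtain ⟨m₀, hm₀mem, hm₀root, -⟩ := hfind 0 (Nat.zero_le l)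
      obtain ⟨k, hkl, hgood⟩ := my_exists_good_k hm₀mem hm₀root
      obtain ⟨m, hmmem, hmroot, hcne⟩ := hfind k hkl
      have hdvd := hgood m hmmem hmroot
      have hm1 : 0 < m := by
        simp only [Finset.mem_Icc] at hmmem
        omega
      exact hcne (by have := my_lem2 hm1 hkl hdvd; omega)
    have hmul : ∀ x ∈ J, gElt l * x ∈ Iideal l := by
      intro x hx
      induction hx using Submodule.span_induction with
      | mem x hx =>
        obtain ⟨k, hk, rfl⟩ := hx
        have : gElt l * Polynomial.toLaurent (myUk l k) = qFact (l - k) * qFact k := by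
          rw [my_gElt_eq, ← map_mul, my_gU hk, ← my_fact_eq hk]
        rw [this]
        exact Ideal.subset_span ⟨k, hk, rfl⟩
      | zero => simp
      | add x y hx hy ihx ihy => rw [mul_add]; exact Ideal.add_mem _ ihx ihy
      | smul r x hx ih =>
        rw [smul_eq_mul, ← mul_assoc, mul_comm (gElt l) r, mul_assoc]
        exact Ideal.mul_mem_left _ r ih
    have h1 : (1 : LaurentPolynomial ℤ) ∈ J := by rw [hJtop]; trivial
    simpa using hmul 1 h1
end

section
/- For all integers l ≥ 0 and 0 ≤ k ≤ l, the element g_l = ∏_{m=1}^{l} Φ_m(q)^{⌊(l+1)/m⌋ − 1} divides {k}_q!·{l−k}_q! in ℤ[q,q^{-1}], where Φ_m is the m-th cyclotomic polynomial. -/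
open LaurentPolynomial Finset

open Polynomial in
lemma qFact_eq_Icc (n : ℕ) : qFact n = ∏ i ∈ Finset.Icc 1 n, qInt i := by
  rw [qFact, qShift]
  refine Finset.prod_nbij' (fun r => n - r) (fun i => n - i) ?_ ?_ ?_ ?_ ?_ <;>
    intro a ha <;> simp only [Finset.mem_range, Finset.mem_Icc] at * <;> try omega
  congr 1
  have : ((n - a : ℕ) : ℤ) = (n : ℤ) - a := by
    have : a ≤ n := by omega
    push_cast [this]; ring
  rw [this]

open Polynomial in
lemma qFact_eq_cyc (n : ℕ) :
    qFact n = Polynomial.toLaurent (∏ m ∈ Finset.Icc 1 n, Polynomial.cyclotomic m ℤ ^ (n / m)) := by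
  rw [qFact_eq_Icc]
  have h1 : ∀ i ∈ Finset.Icc 1 n, qInt i = Polynomial.toLaurent (X ^ i - 1 : Polynomial ℤ) := by
    intro i hi
    simp [qInt, map_sub, Polynomial.toLaurent_X_pow]
  rw [Finset.prod_congr rfl h1, ← map_prod]
  congr 1
  have h2 : ∀ i ∈ Finset.Icc 1 n, (X ^ i - 1 : Polynomial ℤ) =
      ∏ m ∈ (Finset.Icc 1 n).filter (fun m => m ∣ i), cyclotomic m ℤ := by
    intro i hi
    rw [Finset.mem_Icc] at hi
    rw [← Polynomial.prod_cyclotomic_eq_X_pow_sub_one (by omega) ℤ]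
    apply Finset.prod_congr _ (fun _ _ => rfl)
    ext m
    simp only [Nat.mem_divisors, Finset.mem_filter, Finset.mem_Icc]
    constructor
    · rintro ⟨hd, hne⟩
      exact ⟨⟨Nat.one_le_iff_ne_zero.2 (fun hm => by simp [hm] at hd; omega),
        le_trans (Nat.le_of_dvd (by omega) hd) hi.2⟩, hd⟩
    · rintro ⟨_, hd⟩; exact ⟨hd, by omega⟩
  rw [Finset.prod_congr rfl h2]
  simp_rw [Finset.prod_filter]
  rw [Finset.prod_comm]
  apply Finset.prod_congr rfl
  intro m hm
  rw [← Finset.prod_filter, Finset.prod_const]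
  congr 1
  have : Finset.Icc 1 n = Finset.Ioc 0 n := by ext x; simp [Nat.lt_iff_add_one_le]
  rw [this, Nat.Ioc_filter_dvd_card_eq_div]

lemma div_ineq (m k l : ℕ) (hm : 0 < m) (h : k ≤ l) :
    (l + 1) / m - 1 ≤ k / m + (l - k) / m := by
  have h1 := Nat.div_add_mod k m
  have h2 := Nat.div_add_mod (l - k) m
  have h3 := Nat.mod_lt k hm
  have h4 := Nat.mod_lt (l - k) hm
  have key : l + 1 < m * (k / m + (l - k) / m + 2) := by
    have e : m * (k / m + (l - k) / m + 2) = m * (k / m) + m * ((l - k) / m) + 2 * m := by ring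
    omega
  have h5 : (l + 1) / m < k / m + (l - k) / m + 2 := Nat.div_lt_of_lt_mul key
  clear h1 h2 h3 h4 key
  generalize (l + 1) / m = A at *
  generalize k / m = B at *
  generalize (l - k) / m = C at *
  omega

open Polynomial in
lemma extend_prod (k l : ℕ) (h : k ≤ l) :
    (∏ m ∈ Finset.Icc 1 k, cyclotomic m ℤ ^ (k / m)) =
    ∏ m ∈ Finset.Icc 1 l, cyclotomic m ℤ ^ (k / m) := by
  apply Finset.prod_subset (Finset.Icc_subset_Icc le_rfl h)
  intro m hm hm'
  simp only [Finset.mem_Icc] at *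
  rw [Nat.div_eq_of_lt (by omega), pow_zero]

open Polynomial in
/-- For all `0 ≤ k ≤ l`, `g_l` divides `{k}_q! {l-k}_q!` in `ℤ[q,q⁻¹]`. -/
theorem gElt_dvd_qFact_mul_qFact (l k : ℕ) (h : k ≤ l) :
    gElt l ∣ qFact k * qFact (l - k) := by
  rw [qFact_eq_cyc, qFact_eq_cyc, extend_prod k l h, extend_prod (l - k) l (by omega),
    ← map_mul, ← Finset.prod_mul_distrib]
  have hg : gElt l = Polynomial.toLaurent
      (∏ m ∈ Finset.Icc 1 l, cyclotomic m ℤ ^ ((l + 1) / m - 1)) := by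
    rw [gElt, map_prod]; simp [map_pow]
  rw [hg]
  apply _root_.map_dvd
  apply Finset.prod_dvd_prod_of_dvd
  intro m hm
  rw [← pow_add]
  apply pow_dvd_pow
  exact div_ineq m k l (by simp at hm; omega) h
end

section
/- For every integer l ≥ 0, the element g_l = ∏_{m=1}^{l} Φ_m(q)^{⌊(l+1)/m⌋ − 1} lies in the ideal I_l of ℤ[q,q^{-1}] generated by the elements {l−k}_q!{k}_q! for k = 0, …, l; that is, g_l can be written as a ℤ[q,q^{-1}]-linear combination of the products {l−k}_q!{k}_q!. -/
open LaurentPolynomial Finset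

/-! ### Auxiliary lemmas -/

lemma qFact_succ (n : ℕ) : qFact (n + 1) = qFact n * qInt ((n : ℤ) + 1) := by
  unfold qFact qShift
  rw [Finset.prod_range_succ']
  congr 1
  · refine Finset.prod_congr rfl fun i _ => ?_
    congr 1
    omega

lemma T_sub_one_dvd (a z : ℤ) (h : a ∣ z) :
    (T a - 1 : LaurentPolynomial ℤ) ∣ (T z - 1) := by
  obtain ⟨k, rfl⟩ := h
  induction k using Int.induction_on with
  | zero => simp
  | succ k ih =>
    have e : a * ((k : ℤ) + 1) = a * k + a := by ring
    rw [e, T_add]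
    have : (T (a * (k : ℤ)) * T a - 1 : LaurentPolynomial ℤ)
        = T (a * (k : ℤ)) * (T a - 1) + (T (a * (k : ℤ)) - 1) := by ring
    rw [this]
    exact dvd_add (dvd_mul_left _ _) ih
  | pred k ih =>
    have e : a * (-(k : ℤ) - 1) = a * (-(k : ℤ)) + -a := by ring
    rw [e, T_add]
    have h1 : T (-a) * T a = (1 : LaurentPolynomial ℤ) := by
      rw [← T_add, neg_add_cancel, T_zero]
    have h2 : (T (a * -(k : ℤ)) * T (-a) - 1 : LaurentPolynomial ℤ)
        = T (-a) * (T (a * -(k : ℤ)) - 1) + (T (-a) - 1) := by ring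
    rw [h2]
    refine dvd_add (Dvd.dvd.mul_left ih _) ⟨-T (-a), ?_⟩
    linear_combination h1

lemma T_gcd_mem (a b : ℕ) :
    (T ((Nat.gcd a b : ℕ) : ℤ) - 1 : LaurentPolynomial ℤ) ∈
      Ideal.span {T (a : ℤ) - 1, T (b : ℤ) - 1} := by
  have key : ((Nat.gcd a b : ℕ) : ℤ) = a * Nat.gcdA a b + b * Nat.gcdB a b :=
    Nat.gcd_eq_gcd_ab a b
  obtain ⟨c1, hc1⟩ := T_sub_one_dvd (a : ℤ) ((a : ℤ) * Nat.gcdA a b) (dvd_mul_right _ _)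
  obtain ⟨c2, hc2⟩ := T_sub_one_dvd (b : ℤ) ((b : ℤ) * Nat.gcdB a b) (dvd_mul_right _ _)
  rw [Ideal.mem_span_pair]
  refine ⟨c1, T ((a : ℤ) * Nat.gcdA a b) * c2, ?_⟩
  have hT : (T ((Nat.gcd a b : ℕ) : ℤ) : LaurentPolynomial ℤ)
      = T ((a : ℤ) * Nat.gcdA a b) * T ((b : ℤ) * Nat.gcdB a b) := by
    rw [← T_add, ← key]
  rw [hT]
  linear_combination -hc1 - T ((a : ℤ) * Nat.gcdA a b) * hc2

lemma gElt_eq (l : ℕ) :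
    gElt l = Polynomial.toLaurent
      (∏ m ∈ Finset.Icc 1 l, Polynomial.cyclotomic m ℤ ^ ((l + 1) / m - 1)) := by
  rw [gElt, map_prod]
  exact Finset.prod_congr rfl fun m _ => (map_pow _ _ _).symm

lemma poly_succ (l : ℕ) :
    (∏ m ∈ Finset.Icc 1 (l + 1), Polynomial.cyclotomic m ℤ ^ ((l + 2) / m - 1))
      = (∏ m ∈ Finset.Icc 1 l, Polynomial.cyclotomic m ℤ ^ ((l + 1) / m - 1))
        * ∏ m ∈ (l + 2).properDivisors, Polynomial.cyclotomic m ℤ := by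
  have h1 : ∀ m ∈ Finset.Icc 1 (l + 1),
      Polynomial.cyclotomic m ℤ ^ ((l + 2) / m - 1)
        = Polynomial.cyclotomic m ℤ ^ ((l + 1) / m - 1)
          * (if m ∣ l + 2 then Polynomial.cyclotomic m ℤ else 1) := by
    intro m hm
    obtain ⟨h1m, h2m⟩ := Finset.mem_Icc.mp hm
    have hq : 1 ≤ (l + 1) / m := (Nat.one_le_div_iff (by omega)).mpr (by omega)
    have hdiv : (l + 2) / m = (l + 1) / m + if m ∣ l + 2 then 1 else 0 :=
      @Nat.succ_div (l + 1) m
    split_ifs with h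
    · rw [hdiv, if_pos h, show (l + 1) / m + 1 - 1 = ((l + 1) / m - 1) + 1 by omega,
        pow_succ]
    · rw [hdiv, if_neg h, add_zero, mul_one]
  rw [Finset.prod_congr rfl h1, Finset.prod_mul_distrib]
  congr 1
  · rw [Finset.prod_Icc_succ_top (by omega : 1 ≤ l + 1)]
    simp [Nat.div_self]
  · rw [← Finset.prod_filter]
    congr 1

lemma dvd_properDiv_prod {d n : ℕ} (hd : d ∣ n) (hlt : d < n) (hpos : 0 < d) :
    ((Polynomial.X : Polynomial ℤ) ^ d - 1) ∣
      ∏ m ∈ n.properDivisors, Polynomial.cyclotomic m ℤ := by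
  rw [← Polynomial.prod_cyclotomic_eq_X_pow_sub_one hpos]
  refine Finset.prod_dvd_prod_of_subset _ _ _ fun e he => ?_
  rw [Nat.mem_divisors] at he
  rw [Nat.mem_properDivisors]
  exact ⟨he.1.trans hd, lt_of_le_of_lt (Nat.le_of_dvd hpos he.1) hlt⟩

/-- For every `l ≥ 0`, the element `g_l` lies in the ideal `I_l`. -/
theorem gElt_mem_Iideal (l : ℕ) : gElt l ∈ Iideal l := by
  induction l with
  | zero =>
    have h0 : gElt 0 = qFact 0 * qFact 0 := by
      simp [gElt, qFact, qShift]
    rw [h0]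
    exact Ideal.subset_span ⟨0, le_refl 0, rfl⟩
  | succ l ih =>
    set U : LaurentPolynomial ℤ :=
      Polynomial.toLaurent (∏ m ∈ (l + 2).properDivisors, Polynomial.cyclotomic m ℤ)
      with hU
    have hsplit : gElt (l + 1) = gElt l * U := by
      rw [gElt_eq, gElt_eq, hU, ← map_mul]
      congr 1
      exact poly_succ l
    have key : ∀ k ≤ l, U * (qFact (l - k) * qFact k) ∈ Iideal (l + 1) := by
      intro k hk
      set d := Nat.gcd (k + 1) (l + 1 - k) with hd
      have hdvd : d ∣ l + 2 := by
        have hsum : (k + 1) + (l + 1 - k) = l + 2 := by omega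
        have := Nat.dvd_add (Nat.gcd_dvd_left (k + 1) (l + 1 - k))
          (Nat.gcd_dvd_right (k + 1) (l + 1 - k))
        rwa [hsum] at this
      have hpos : 0 < d := Nat.gcd_pos_of_pos_left _ (Nat.succ_pos k)
      have hlt : d < l + 2 :=
        lt_of_le_of_lt (Nat.gcd_le_left _ (Nat.succ_pos k)) (by omega)
      have hdU : ((T ((d : ℕ) : ℤ) - 1 : LaurentPolynomial ℤ)) ∣ U := by
        have hx := dvd_properDiv_prod hdvd hlt hpos
        have hmap := map_dvd Polynomial.toLaurent hx
        rwa [map_sub, Polynomial.toLaurent_X_pow, map_one] at hmap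
      obtain ⟨c, hc⟩ := hdU
      have hmem := T_gcd_mem (k + 1) (l + 1 - k)
      rw [Ideal.mem_span_pair] at hmem
      obtain ⟨u, v, huv⟩ := hmem
      have g1 : qFact (l - k) * qFact (k + 1) ∈ Iideal (l + 1) :=
        Ideal.subset_span ⟨k + 1, by omega, by
          rw [show l + 1 - (k + 1) = l - k by omega]⟩
      have g2 : qFact (l + 1 - k) * qFact k ∈ Iideal (l + 1) :=
        Ideal.subset_span ⟨k, by omega, rfl⟩
      have e1 : qFact (k + 1) = qFact k * (T ((k + 1 : ℕ) : ℤ) - 1) := by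
        rw [qFact_succ, qInt, show ((k : ℤ) + 1) = ((k + 1 : ℕ) : ℤ) by omega]
      have e2 : qFact (l + 1 - k) = qFact (l - k) * (T ((l + 1 - k : ℕ) : ℤ) - 1) := by
        rw [show l + 1 - k = (l - k) + 1 by omega, qFact_succ, qInt,
          show (((l - k : ℕ) : ℤ) + 1) = (((l - k) + 1 : ℕ) : ℤ) by omega]
      have expand : U * (qFact (l - k) * qFact k)
          = (c * u) * (qFact (l - k) * qFact (k + 1))
            + (c * v) * (qFact (l + 1 - k) * qFact k) := by
        rw [hc, e1, e2]
        linear_combination (-(c * qFact (l - k) * qFact k)) * huv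
      rw [expand]
      exact Ideal.add_mem _ (Ideal.mul_mem_left _ _ g1) (Ideal.mul_mem_left _ _ g2)
    have hle : Iideal l ≤ Submodule.comap
        (LinearMap.mulLeft (LaurentPolynomial ℤ) U) (Iideal (l + 1)) := by
      rw [Iideal, Ideal.span_le]
      rintro x ⟨k, hk, rfl⟩
      simpa using key k hk
    have := hle ih
    simp only [Submodule.mem_comap, LinearMap.mulLeft_apply] at this
    rw [hsplit, mul_comm]
    exact this
end
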